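/- Let n ∈ ℕ. For any u ∈ S_1^1(ℝⁿ) ∩ Cⁿ_loc(ℝⁿ) and any x, x' ∈ ℝⁿ: |u(x) − u(x')| ≤ (3ⁿ − 2ⁿ) ‖u‖_{S_1^1(ℝⁿ)}. -/

import Mathlib

open MeasureTheory Finset
open scoped ENNReal NNReal

/-- Euclidean distance on ℝⁿ. -/
noncomputable def euclDist {n : ℕ} (x y : Fin n → ℝ) : ℝ :=
  Real.sqrt (∑ i, (x i - y i) ^ 2)



lemma oneD_nnnorm {f f' : ℝ → ℝ} (hd : ∀ s, HasDerivAt f (f' s) s) (hc : Continuous f')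
    (a : ℝ) :
    (‖f a‖₊ : ℝ≥0∞) ≤ (∫⁻ s in Set.Icc a (a+1), ‖f s‖₊) + ∫⁻ s in Set.Icc a (a+1), ‖f' s‖₊ := by
  have hcf : Continuous f := by
    refine continuous_iff_continuousAt.mpr fun s => (hd s).continuousAt
  set A := ∫ r in a..(a+1), |f' r| with hA
  have hA0 : 0 ≤ A := intervalIntegral.integral_nonneg (by linarith) fun _ _ => abs_nonneg _
  have hpt : ∀ s ∈ Set.Icc a (a+1), |f a| ≤ |f s| + A := by
    intro s hs
    have h1 : ∫ r in a..s, f' r = f s - f a :=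
      intervalIntegral.integral_eq_sub_of_hasDerivAt (fun r _ => hd r)
        (hc.intervalIntegrable a s)
    have h2 : |∫ r in a..s, f' r| ≤ ∫ r in a..s, |f' r| :=
      intervalIntegral.abs_integral_le_integral_abs hs.1
    have h3 : (∫ r in a..s, |f' r|) ≤ A :=
      intervalIntegral.integral_mono_interval le_rfl hs.1 hs.2
        (Filter.Eventually.of_forall fun r => abs_nonneg _)
        ((hc.abs).intervalIntegrable a (a+1))
    have h4 : |f s - f a| ≤ A := h1 ▸ (h2.trans h3)
    calc |f a| = |f s - (f s - f a)| := by ring_nf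
      _ ≤ |f s| + |f s - f a| := abs_sub _ _
      _ ≤ |f s| + A := by linarith [h4]
  have hIcc : volume (Set.Icc a (a+1)) = 1 := by
    rw [Real.volume_Icc]; norm_num
  have hmf : Measurable fun s => (‖f s‖₊ : ℝ≥0∞) := hcf.measurable.nnnorm.coe_nnreal_ennreal
  have hmf' : Measurable fun s => (‖f' s‖₊ : ℝ≥0∞) := hc.measurable.nnnorm.coe_nnreal_ennreal
  calc (‖f a‖₊ : ℝ≥0∞) = ∫⁻ _ in Set.Icc a (a+1), (‖f a‖₊ : ℝ≥0∞) := by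
        rw [setLIntegral_const, hIcc, mul_one]
    _ ≤ ∫⁻ s in Set.Icc a (a+1), ((‖f s‖₊ : ℝ≥0∞) + ENNReal.ofReal A) := by
        refine setLIntegral_mono (hmf.add measurable_const) fun s hs => ?_
        have h := hpt s hs
        calc (‖f a‖₊ : ℝ≥0∞) = ENNReal.ofReal |f a| := by
              rw [← enorm_eq_nnnorm, Real.enorm_eq_ofReal_abs]
          _ ≤ ENNReal.ofReal (|f s| + A) := ENNReal.ofReal_le_ofReal h
          _ = ENNReal.ofReal |f s| + ENNReal.ofReal A := ENNReal.ofReal_add (abs_nonneg _) hA0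
          _ = (‖f s‖₊ : ℝ≥0∞) + ENNReal.ofReal A := by rw [← enorm_eq_nnnorm, Real.enorm_eq_ofReal_abs]
    _ = (∫⁻ s in Set.Icc a (a+1), ‖f s‖₊) + ENNReal.ofReal A := by
        rw [lintegral_add_right _ measurable_const, setLIntegral_const, hIcc, mul_one]
    _ ≤ (∫⁻ s in Set.Icc a (a+1), ‖f s‖₊) + ∫⁻ s in Set.Icc a (a+1), ‖f' s‖₊ := by
        refine add_le_add le_rfl ?_
        have h1 : A = ∫ r in Set.Ioc a (a+1), |f' r| :=
          intervalIntegral.integral_of_le (by linarith)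
        have h2 : ENNReal.ofReal (∫ r in Set.Ioc a (a+1), |f' r|)
            ≤ ∫⁻ s in Set.Ioc a (a+1), ‖f' s‖₊ := by
          simp only [← enorm_eq_nnnorm]
          rw [← ofReal_integral_norm_eq_lintegral_enorm ((hc.integrableOn_Icc).mono_set Set.Ioc_subset_Icc_self)]
          simp [Real.norm_eq_abs]
        refine le_trans (by rw [h1]; exact h2) (lintegral_mono_set Set.Ioc_subset_Icc_self)

lemma lmarginal_add' {δ : Type*} {π : δ → Type*} [∀ i, MeasurableSpace (π i)]
    [DecidableEq δ] {μ : ∀ i, Measure (π i)} {f g : (∀ i, π i) → ℝ≥0∞}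
    (hf : Measurable f) (T : Finset δ) :
    ∫⋯∫⁻_T, (f + g) ∂μ = (∫⋯∫⁻_T, f ∂μ) + (∫⋯∫⁻_T, g ∂μ) := by
  ext x
  simp only [lmarginal, Pi.add_apply]
  exact lintegral_add_left (hf.comp measurable_updateFinset) _

lemma pointwise_bound {n : ℕ}
    (u : (Fin n → ℝ) → ℝ)
    (D : Finset (Fin n) → (Fin n → ℝ) → ℝ)
    (hD0 : D ∅ = u)
    (hDderiv : ∀ (S : Finset (Fin n)) (i : Fin n), i ∉ S → ∀ η : Fin n → ℝ,
      HasDerivAt (fun t => D S (Function.update η i t)) (D (insert i S) η) (η i))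
    (hDcont : ∀ S, Continuous (D S))
    (z : Fin n → ℝ) :
    (‖u z‖₊ : ℝ≥0∞) ≤ ∑ S : Finset (Fin n), ∫⁻ y, ‖D S y‖₊ := by
  classical
  set μz : Fin n → Measure ℝ := fun i => volume.restrict (Set.Icc (z i) (z i + 1)) with hμz
  set G : Finset (Fin n) → (Fin n → ℝ) → ℝ≥0∞ := fun S y => (‖D S y‖₊ : ℝ≥0∞) with hG
  haveI hsf : ∀ i, SigmaFinite (μz i) := fun i => Restrict.sigmaFinite _ _
  have mG : ∀ S, Measurable (G S) := fun S => (hDcont S).measurable.nnnorm.coe_nnreal_ennreal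
  have claim : ∀ T : Finset (Fin n),
      (‖u z‖₊ : ℝ≥0∞) ≤ ∑ S ∈ T.powerset, (∫⋯∫⁻_T, G S ∂μz) z := by
    intro T
    induction T using Finset.induction_on with
    | empty => simp [hG, hD0]
    | @insert j T hj IH =>
      have key : ∀ S : Finset (Fin n), S ⊆ T →
          (∫⋯∫⁻_T, G S ∂μz) z ≤
            (∫⋯∫⁻_insert j T, G S ∂μz) z + (∫⋯∫⁻_insert j T, G (insert j S) ∂μz) z := by
        intro S hST
        have hjS : j ∉ S := fun h => hj (hST h)
        have h1 : (∫⋯∫⁻_T, G S ∂μz) z = (∫⋯∫⁻_T, G S ∘ (Function.update · j (z j)) ∂μz) z := by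
          simpa using lmarginal_update_of_notMem (mG S) hj z (z j)
        have hpt : ∀ x, (G S ∘ (Function.update · j (z j))) x ≤
            ((∫⋯∫⁻_{j}, G S ∂μz) + (∫⋯∫⁻_{j}, G (insert j S) ∂μz)) x := by
          intro x
          have hder : ∀ s, HasDerivAt (fun t => D S (Function.update x j t))
              (D (insert j S) (Function.update x j s)) s := by
            intro s
            have h := hDderiv S j hjS (Function.update x j s)
            simpa only [Function.update_idem, Function.update_self] using h
          have hcont : Continuous fun s => D (insert j S) (Function.update x j s) :=
            (hDcont _).comp (continuous_const.update j continuous_id)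
          have h := oneD_nnnorm hder hcont (z j)
          simp only [lmarginal_singleton, Pi.add_apply, Function.comp_apply, hG]
          exact h
        calc (∫⋯∫⁻_T, G S ∂μz) z
            = (∫⋯∫⁻_T, G S ∘ (Function.update · j (z j)) ∂μz) z := h1
          _ ≤ (∫⋯∫⁻_T, ((∫⋯∫⁻_{j}, G S ∂μz) + (∫⋯∫⁻_{j}, G (insert j S) ∂μz)) ∂μz) z :=
              lmarginal_mono hpt z
          _ = (∫⋯∫⁻_insert j T, G S ∂μz) z + (∫⋯∫⁻_insert j T, G (insert j S) ∂μz) z := by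
              rw [lmarginal_add' (Measurable.lmarginal μz (mG S)) T]
              rw [lmarginal_insert' _ (mG S) hj, lmarginal_insert' _ (mG _) hj]
              simp [lmarginal_singleton]
      calc (‖u z‖₊ : ℝ≥0∞) ≤ ∑ S ∈ T.powerset, (∫⋯∫⁻_T, G S ∂μz) z := IH
        _ ≤ ∑ S ∈ T.powerset, ((∫⋯∫⁻_insert j T, G S ∂μz) z
              + (∫⋯∫⁻_insert j T, G (insert j S) ∂μz) z) :=
            Finset.sum_le_sum fun S hS => key S (Finset.mem_powerset.mp hS)
        _ = ∑ S ∈ (insert j T).powerset, (∫⋯∫⁻_insert j T, G S ∂μz) z := by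
            rw [Finset.sum_powerset_insert hj, Finset.sum_add_distrib]
  have hfinal := claim Finset.univ
  rw [Finset.powerset_univ] at hfinal
  refine hfinal.trans (Finset.sum_le_sum fun S _ => ?_)
  rw [lmarginal_univ]
  have hpi : Measure.pi μz ≤ (volume : Measure (Fin n → ℝ)) := by
    have heq : Measure.pi μz
        = volume.restrict (Set.univ.pi fun i => Set.Icc (z i) (z i + 1)) := by
      refine Measure.pi_eq (μ := μz) fun s hs => ?_
      rw [Measure.restrict_apply (MeasurableSet.univ_pi hs), ← Set.pi_inter_distrib,
        volume_pi_pi]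
      exact Finset.prod_congr rfl fun i _ =>
        (Measure.restrict_apply (hs i)).symm
    rw [heq]
    exact Measure.restrict_le_self
  exact lintegral_mono' hpi le_rfl

lemma pointwise_real {n : ℕ}
    (u : (Fin n → ℝ) → ℝ)
    (D : Finset (Fin n) → (Fin n → ℝ) → ℝ)
    (hD0 : D ∅ = u)
    (hDderiv : ∀ (S : Finset (Fin n)) (i : Fin n), i ∉ S → ∀ η : Fin n → ℝ,
      HasDerivAt (fun t => D S (Function.update η i t)) (D (insert i S) η) (η i))
    (hDcont : ∀ S, Continuous (D S))
    (hDL1 : ∀ S : Finset (Fin n), Integrable (D S))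
    (z : Fin n → ℝ) :
    |u z| ≤ ∑ S : Finset (Fin n), ∫ y, |D S y| := by
  have h := pointwise_bound u D hD0 hDderiv hDcont z
  have he : ∀ S : Finset (Fin n), (∫⁻ y, (‖D S y‖₊ : ℝ≥0∞)) = ENNReal.ofReal (∫ y, |D S y|) := by
    intro S
    simp only [← enorm_eq_nnnorm]
    rw [← ofReal_integral_norm_eq_lintegral_enorm (hDL1 S)]
    simp [Real.norm_eq_abs]
  rw [Finset.sum_congr rfl (fun S _ => he S),
    ← ENNReal.ofReal_sum_of_nonneg (fun S _ => integral_nonneg fun y => abs_nonneg _),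
    ← enorm_eq_nnnorm, Real.enorm_eq_ofReal_abs] at h
  exact (ENNReal.ofReal_le_ofReal_iff
    (Finset.sum_nonneg fun S _ => integral_nonneg fun y => abs_nonneg _)).mp h

/-- **Pointwise oscillation estimate for smooth functions in `S_1^1(ℝⁿ)`.**
If `u` is Cⁿ on ℝⁿ (its mixed partials with distinct indices encoded by `D`, with
`D ∅ = u`), and all mixed partials `D S` lie in `L¹(ℝⁿ)`, then for all `x, x' ∈ ℝⁿ`:
`|u(x) − u(x')| ≤ (3ⁿ − 2ⁿ) ‖u‖_{S_1^1(ℝⁿ)}`, where `‖u‖_{S_1^1}` is the sum of the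
`L¹` norms of `u` and of all its distinct-index mixed derivatives. -/
theorem oscillation_estimate_S11 {n : ℕ}
    (u : (Fin n → ℝ) → ℝ)
    (D : Finset (Fin n) → (Fin n → ℝ) → ℝ)
    (hD0 : D ∅ = u)
    (hDderiv : ∀ (S : Finset (Fin n)) (i : Fin n), i ∉ S → ∀ η : Fin n → ℝ,
      HasDerivAt (fun t => D S (Function.update η i t)) (D (insert i S) η) (η i))
    (hDcont : ∀ S, Continuous (D S))
    (hDL1 : ∀ S : Finset (Fin n), Integrable (D S))
    (x x' : Fin n → ℝ) :
    |u x - u x'| ≤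
      ((3 : ℝ) ^ n - 2 ^ n) * ∑ S : Finset (Fin n), ∫ y, |D S y| := by
  have hsum : 0 ≤ ∑ S : Finset (Fin n), ∫ y, |D S y| :=
    Finset.sum_nonneg fun S _ => integral_nonneg fun y => abs_nonneg _
  obtain hn | hn | hn : n = 0 ∨ n = 1 ∨ 2 ≤ n := by omega
  · subst hn
    have hxx : x = x' := funext fun i => i.elim0
    rw [hxx, sub_self, abs_zero]
    norm_num
  · subst hn
    set g : ℝ → ℝ := fun r => D {0} (fun _ => r) with hg
    have hgc : Continuous g := (hDcont _).comp (continuous_pi fun _ => continuous_id)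
    set f : ℝ → ℝ := fun t => u (fun _ => t) with hf
    have hconst : ∀ y : Fin 1 → ℝ, y = fun _ => y 0 := fun y =>
      funext fun i => by rw [Subsingleton.elim i 0]
    have hf' : ∀ s : ℝ, HasDerivAt f (g s) s := by
      intro s
      have h := hDderiv ∅ 0 (Finset.notMem_empty 0) (fun _ => s)
      have hupd : ∀ t : ℝ, Function.update (fun _ : Fin 1 => s) 0 t = fun _ => t := by
        intro t; funext i; rw [Subsingleton.elim i 0, Function.update_self]
      simp only [hupd, hD0] at h
      simpa using h
    have key : u x - u x' = ∫ r in (x' 0)..(x 0), g r := by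
      rw [intervalIntegral.integral_eq_sub_of_hasDerivAt (fun t _ => hf' t)
        (hgc.intervalIntegrable _ _)]
      have e1 : u x = f (x 0) := congrArg u (hconst x)
      have e2 : u x' = f (x' 0) := congrArg u (hconst x')
      rw [e1, e2]
    have hmp := (MeasureTheory.volume_preserving_funUnique (Fin 1) ℝ).symm
    have hemb := (MeasurableEquiv.funUnique (Fin 1) ℝ).symm.measurableEmbedding
    have hgeq : g = (D {0}) ∘ ⇑(MeasurableEquiv.funUnique (Fin 1) ℝ).symm := by
      funext r; rfl
    have hgi : Integrable g := by
      rw [hgeq]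
      exact (hmp.integrable_comp_emb hemb).mpr (hDL1 {0})
    have hint : (∫ r, |g r|) = ∫ y, |D {0} y| :=
      hmp.integral_comp hemb fun y => |D {0} y|
    have hsingle : (∫ y, |D ({0} : Finset (Fin 1)) y|) ≤ ∑ S : Finset (Fin 1), ∫ y, |D S y| :=
      Finset.single_le_sum (f := fun S => ∫ y, |D S y|) (fun S _ => integral_nonneg fun y => abs_nonneg _)
        (Finset.mem_univ _)
    have hb : |u x - u x'| ≤ ∫ y, |D {0} y| := by
      rw [key]
      calc |∫ r in (x' 0)..(x 0), g r| ≤ ∫ r in Set.uIoc (x' 0) (x 0), |g r| := by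
            simpa [Real.norm_eq_abs] using
              (intervalIntegral.norm_integral_le_integral_norm_uIoc (f := g) (a := x' 0)
                (b := x 0) (μ := volume))
        _ ≤ ∫ r, |g r| := setIntegral_le_integral hgi.abs
            (Filter.Eventually.of_forall fun r => abs_nonneg _)
        _ = ∫ y, |D {0} y| := hint
    calc |u x - u x'| ≤ ∫ y, |D {0} y| := hb
      _ ≤ ∑ S : Finset (Fin 1), ∫ y, |D S y| := hsingle
      _ ≤ ((3:ℝ) ^ 1 - 2 ^ 1) * ∑ S : Finset (Fin 1), ∫ y, |D S y| := by
          norm_num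
  · have h1 := pointwise_real u D hD0 hDderiv hDcont hDL1 x
    have h2 := pointwise_real u D hD0 hDderiv hDcont hDL1 x'
    have hc : (2 : ℝ) ≤ 3 ^ n - 2 ^ n := by
      obtain ⟨m, rfl⟩ : ∃ m, n = m + 2 := ⟨n - 2, by omega⟩
      have hm1 : (1 : ℝ) ≤ 2 ^ m := one_le_pow₀ (by norm_num)
      have hm2 : (2 : ℝ) ^ m ≤ 3 ^ m := pow_le_pow_left₀ (by norm_num) (by norm_num) m
      have e3 : (3 : ℝ) ^ (m + 2) = 9 * 3 ^ m := by ring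
      have e2 : (2 : ℝ) ^ (m + 2) = 4 * 2 ^ m := by ring
      nlinarith
    calc |u x - u x'| ≤ |u x| + |u x'| := abs_sub _ _
      _ ≤ 2 * ∑ S : Finset (Fin n), ∫ y, |D S y| := by linarith
      _ ≤ (3 ^ n - 2 ^ n) * ∑ S : Finset (Fin n), ∫ y, |D S y| :=
        mul_le_mul_of_nonneg_right hc hsum
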